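/- arXiv:2309.08456 — 3 statements merged into one kernel-verified Lean document; each statement's English description precedes it below -/
import Mathlib

section
/- Let R be a Kähler curvature tensor on a complex inner product space V, and let C ≥ 0 be a constant such that |R(Z)| ≤ C‖Z‖⁴ for all Z ∈ V. Then for every pair of orthonormal vectors X, Y ∈ V, |2R(X,X̄,Y,Ȳ) − R(X,Ȳ,X,Ȳ) − R(Y,X̄,Y,X̄)| ≤ 13C. (This is the pointwise content of the theorem that a Kähler manifold whose holomorphic sectional curvature is bounded has bounded sectional curvature: the displayed quantity equals the sectional-curvature numerator R(u₁,u₂,u₂,u₁) of the underlying real curvature tensor for u₁ = X + X̄ and u₂ = Y + Ȳ.) -/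
open scoped ComplexConjugate

noncomputable section

/-- A Kähler curvature tensor on a complex inner product space `V`: a four-argument
function, whose value at `(X,Y,Z,W)` is written `R(X,Ȳ,Z,W̄)`, that is `ℂ`-linear in the
1st and 3rd arguments, conjugate-linear in the 2nd and 4th arguments, with the symmetries
`R(X,Ȳ,Z,W̄) = R(Z,Ȳ,X,W̄) = R(X,W̄,Z,Ȳ)` and `conj (R(X,Ȳ,Z,W̄)) = R(Y,X̄,W,Z̄)`. -/
structure KahlerCurvatureTensor (V : Type*) [NormedAddCommGroup V]
    [InnerProductSpace ℂ V] where
  R : V → V → V → V → ℂ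
  map_add₁ : ∀ X X' Y Z W, R (X + X') Y Z W = R X Y Z W + R X' Y Z W
  map_smul₁ : ∀ (c : ℂ) (X Y Z W), R (c • X) Y Z W = c * R X Y Z W
  map_add₂ : ∀ X Y Y' Z W, R X (Y + Y') Z W = R X Y Z W + R X Y' Z W
  map_smul₂ : ∀ (c : ℂ) (X Y Z W), R X (c • Y) Z W = conj c * R X Y Z W
  map_add₃ : ∀ X Y Z Z' W, R X Y (Z + Z') W = R X Y Z W + R X Y Z' W
  map_smul₃ : ∀ (c : ℂ) (X Y Z W), R X Y (c • Z) W = c * R X Y Z W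
  map_add₄ : ∀ X Y Z W W', R X Y Z (W + W') = R X Y Z W + R X Y Z W'
  map_smul₄ : ∀ (c : ℂ) (X Y Z W), R X Y Z (c • W) = conj c * R X Y Z W
  symm₁₃ : ∀ X Y Z W, R X Y Z W = R Z Y X W
  symm₂₄ : ∀ X Y Z W, R X Y Z W = R X W Z Y
  conj_symm : ∀ X Y Z W, conj (R X Y Z W) = R Y X W Z

/-- The abbreviation `R(Z) := R(Z,Z̄,Z,Z̄)`. -/
def KahlerCurvatureTensor.diag {V : Type*} [NormedAddCommGroup V] [InnerProductSpace ℂ V]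
    (R : KahlerCurvatureTensor V) (Z : V) : ℂ :=
  R.R Z Z Z Z

variable {V : Type*} [NormedAddCommGroup V] [InnerProductSpace ℂ V]

lemma KahlerCurvatureTensor.expand_diag (R : KahlerCurvatureTensor V) (X Y : V) (c : ℂ) :
    R.diag (X + c • Y) =
      R.R X X X X + 2 * c * R.R Y X X X + 2 * conj c * R.R X Y X X
        + 4 * (c * conj c) * R.R X X Y Y + c ^ 2 * R.R Y X Y X
        + (conj c) ^ 2 * R.R X Y X Y + 2 * (c ^ 2 * conj c) * R.R Y Y Y X
        + 2 * (c * (conj c) ^ 2) * R.R X Y Y Y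
        + (c ^ 2 * (conj c) ^ 2) * R.R Y Y Y Y := by
  have hA : R.R X X Y X = R.R Y X X X := R.symm₁₃ X X Y X
  have hB : R.R X X X Y = R.R X Y X X := R.symm₂₄ X X X Y
  have hC1 : R.R Y Y X X = R.R X X Y Y := by
    rw [R.symm₁₃ Y Y X X, R.symm₂₄ X Y Y X]
  have hC2 : R.R Y X X Y = R.R X X Y Y := R.symm₁₃ Y X X Y
  have hC3 : R.R X Y Y X = R.R X X Y Y := R.symm₂₄ X Y Y X
  have hD : R.R Y X Y Y = R.R Y Y Y X := R.symm₂₄ Y X Y Y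
  have hE : R.R Y Y X Y = R.R X Y Y Y := R.symm₁₃ Y Y X Y
  simp only [KahlerCurvatureTensor.diag, R.map_add₁, R.map_add₂, R.map_add₃, R.map_add₄,
    R.map_smul₁, R.map_smul₂, R.map_smul₃, R.map_smul₄]
  rw [hA, hB, hC1, hC2, hC3, hD, hE]
  ring

theorem stmt6 (R : KahlerCurvatureTensor V) (C : ℝ) (hC : 0 ≤ C)
    (hbound : ∀ Z : V, ‖R.diag Z‖ ≤ C * ‖Z‖ ^ 4)
    (X Y : V) (hX : ‖X‖ = 1) (hY : ‖Y‖ = 1) (hXY : (inner ℂ X Y : ℂ) = 0) :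
    ‖2 * R.R X X Y Y - R.R X Y X Y - R.R Y X Y X‖ ≤ 13 * C := by
  have E1 := R.expand_diag X Y 1
  have E2 := R.expand_diag X Y (-1)
  have E3 := R.expand_diag X Y Complex.I
  have E4 := R.expand_diag X Y (-Complex.I)
  simp only [map_one, map_neg, Complex.conj_I] at E1 E2 E3 E4
  have key : 2 * R.R X X Y Y - R.R X Y X Y - R.R Y X Y X =
      (3/8 : ℂ) * (R.diag (X + Complex.I • Y) + R.diag (X + (-Complex.I) • Y))
        - (1/8 : ℂ) * (R.diag (X + (1:ℂ) • Y) + R.diag (X + (-1:ℂ) • Y))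
        - (1/2 : ℂ) * (R.diag X + R.diag Y) := by
    rw [E1, E2, E3, E4, KahlerCurvatureTensor.diag, KahlerCurvatureTensor.diag]
    linear_combination (3*R.R X X Y Y - (3/4)*R.R X Y X Y - (3/4)*R.R Y X Y X
      - (3/4)*(Complex.I^2-1)*R.R Y Y Y Y) * Complex.I_sq
  have hn : ∀ c : ℂ, ‖c‖ = 1 → ‖X + c • Y‖ ^ 4 = 4 := by
    intro c hc
    have h2 : ‖X + c • Y‖ ^ 2 = 2 := by
      rw [@norm_add_sq ℂ]
      rw [inner_smul_right, hXY]
      simp [hX, hY, norm_smul, hc]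
      norm_num
    calc ‖X + c • Y‖ ^ 4 = (‖X + c • Y‖ ^ 2) ^ 2 := by ring
      _ = 4 := by rw [h2]; norm_num
  have b1 : ‖R.diag (X + Complex.I • Y)‖ ≤ 4 * C := by
    have := hbound (X + Complex.I • Y)
    rwa [hn Complex.I (by simp), mul_comm] at this
  have b2 : ‖R.diag (X + (-Complex.I) • Y)‖ ≤ 4 * C := by
    have := hbound (X + (-Complex.I) • Y)
    rwa [hn (-Complex.I) (by simp), mul_comm] at this
  have b3 : ‖R.diag (X + (1:ℂ) • Y)‖ ≤ 4 * C := by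
    have := hbound (X + (1:ℂ) • Y)
    rwa [hn 1 (by simp), mul_comm] at this
  have b4 : ‖R.diag (X + (-1:ℂ) • Y)‖ ≤ 4 * C := by
    have := hbound (X + (-1:ℂ) • Y)
    rwa [hn (-1) (by simp), mul_comm] at this
  have b5 : ‖R.diag X‖ ≤ C := by
    have := hbound X
    rwa [hX, one_pow, mul_one] at this
  have b6 : ‖R.diag Y‖ ≤ C := by
    have := hbound Y
    rwa [hY, one_pow, mul_one] at this
  rw [key]
  calc ‖(3/8 : ℂ) * (R.diag (X + Complex.I • Y) + R.diag (X + (-Complex.I) • Y))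
        - (1/8 : ℂ) * (R.diag (X + (1:ℂ) • Y) + R.diag (X + (-1:ℂ) • Y))
        - (1/2 : ℂ) * (R.diag X + R.diag Y)‖
      ≤ ‖(3/8 : ℂ) * (R.diag (X + Complex.I • Y) + R.diag (X + (-Complex.I) • Y))
          - (1/8 : ℂ) * (R.diag (X + (1:ℂ) • Y) + R.diag (X + (-1:ℂ) • Y))‖
        + ‖(1/2 : ℂ) * (R.diag X + R.diag Y)‖ := norm_sub_le _ _
    _ ≤ ‖(3/8 : ℂ) * (R.diag (X + Complex.I • Y) + R.diag (X + (-Complex.I) • Y))‖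
        + ‖(1/8 : ℂ) * (R.diag (X + (1:ℂ) • Y) + R.diag (X + (-1:ℂ) • Y))‖
        + ‖(1/2 : ℂ) * (R.diag X + R.diag Y)‖ := by
          gcongr; exact norm_sub_le _ _
    _ ≤ (3/8) * (4*C + 4*C) + (1/8) * (4*C + 4*C) + (1/2) * (C + C) := by
          gcongr ?_ + ?_ + ?_ <;>
          · rw [norm_mul]
            gcongr
            · norm_num [norm_div, Complex.norm_ofNat, norm_one]
            · exact le_trans (norm_add_le _ _) (by gcongr <;> assumption)
    _ ≤ 13 * C := by linarith

end
end

section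
/- Let R be a Kähler curvature tensor on a complex inner product space V, and let C ≥ 0 be a constant such that |R(Z)| ≤ C‖Z‖⁴ for all Z ∈ V. Then for every pair of orthonormal vectors X, Y ∈ V, |R(X,X̄,Y,Ȳ)| ≤ (5/2)·C. -/
open scoped ComplexConjugate

noncomputable section

variable {V : Type*} [NormedAddCommGroup V] [InnerProductSpace ℂ V]

/-- Polarization identity: averaging `R.diag (X + aY)` over fourth roots of unity `a`
isolates the bisectional term. -/
lemma KahlerCurvatureTensor.key (R : KahlerCurvatureTensor V) (X Y : V) :
    R.diag (X + Y) + R.diag (X - Y) + R.diag (X + Complex.I • Y)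
      + R.diag (X - Complex.I • Y)
      = 4 * R.diag X + 4 * R.diag Y + 16 * R.R X X Y Y := by
  have h1 : R.R Y Y X X = R.R X X Y Y := by rw [R.symm₁₃ Y Y X X, R.symm₂₄ X Y Y X]
  have h2 : R.R Y X X Y = R.R X X Y Y := by rw [R.symm₁₃ Y X X Y]
  have h3 : R.R X Y Y X = R.R X X Y Y := by rw [R.symm₂₄ X Y Y X]
  simp only [KahlerCurvatureTensor.diag, sub_eq_add_neg, ← neg_one_smul ℂ Y,
    ← neg_one_smul ℂ (Complex.I • Y), smul_smul, R.map_add₁, R.map_add₂, R.map_add₃,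
    R.map_add₄, R.map_smul₁, R.map_smul₂, R.map_smul₃, R.map_smul₄, map_mul, map_neg,
    map_one, Complex.conj_I]
  rw [h1, h2, h3]
  ring_nf
  simp [Complex.I_sq]
  ring

lemma norm_aux (X Y : V) (hX : ‖X‖ = 1) (hY : ‖Y‖ = 1) (hXY : (inner ℂ X Y : ℂ) = 0)
    (c : ℂ) (hc : ‖c‖ = 1) : ‖X + c • Y‖ ^ 2 = 2 := by
  rw [@norm_add_sq ℂ, inner_smul_right, hXY, hX, norm_smul, hc, hY]
  norm_num

theorem stmt16 (R : KahlerCurvatureTensor V) (C : ℝ) (hC : 0 ≤ C)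
    (hbound : ∀ Z : V, ‖R.diag Z‖ ≤ C * ‖Z‖ ^ 4)
    (X Y : V) (hX : ‖X‖ = 1) (hY : ‖Y‖ = 1) (hXY : (inner ℂ X Y : ℂ) = 0) :
    ‖R.R X X Y Y‖ ≤ 5 / 2 * C := by
  have hb : ∀ c : ℂ, ‖c‖ = 1 → ‖R.diag (X + c • Y)‖ ≤ 4 * C := by
    intro c hc
    have h2 : ‖X + c • Y‖ ^ 2 = 2 := norm_aux X Y hX hY hXY c hc
    have h4 : ‖X + c • Y‖ ^ 4 = 4 := by
      have : ‖X + c • Y‖ ^ 4 = (‖X + c • Y‖ ^ 2) ^ 2 := by ring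
      rw [this, h2]; norm_num
    calc ‖R.diag (X + c • Y)‖ ≤ C * ‖X + c • Y‖ ^ 4 := hbound _
      _ = 4 * C := by rw [h4]; ring
  have e1 : ‖R.diag (X + Y)‖ ≤ 4 * C := by
    have := hb 1 (by norm_num)
    simpa using this
  have e2 : ‖R.diag (X - Y)‖ ≤ 4 * C := by
    have := hb (-1) (by norm_num)
    simpa [sub_eq_add_neg, neg_one_smul] using this
  have e3 : ‖R.diag (X + Complex.I • Y)‖ ≤ 4 * C := hb Complex.I (by simp)
  have e4 : ‖R.diag (X - Complex.I • Y)‖ ≤ 4 * C := by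
    have := hb (-Complex.I) (by simp)
    simpa [sub_eq_add_neg, neg_smul] using this
  have eX : ‖R.diag X‖ ≤ C := by simpa [hX] using hbound X
  have eY : ‖R.diag Y‖ ≤ C := by simpa [hY] using hbound Y
  have hkey := R.key X Y
  have h16 : (16 : ℂ) * R.R X X Y Y
      = R.diag (X + Y) + R.diag (X - Y) + R.diag (X + Complex.I • Y)
        + R.diag (X - Complex.I • Y) - 4 * R.diag X - 4 * R.diag Y := by
    linear_combination -hkey
  have tri : ∀ a b c d e f : ℂ, ‖a + b + c + d - e - f‖
      ≤ ‖a‖ + ‖b‖ + ‖c‖ + ‖d‖ + ‖e‖ + ‖f‖ := by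
    intro a b c d e f
    have h1 : ‖a + b‖ ≤ ‖a‖ + ‖b‖ := norm_add_le _ _
    have h2 : ‖a + b + c‖ ≤ ‖a + b‖ + ‖c‖ := norm_add_le _ _
    have h3 : ‖a + b + c + d‖ ≤ ‖a + b + c‖ + ‖d‖ := norm_add_le _ _
    have h4 : ‖a + b + c + d - e‖ ≤ ‖a + b + c + d‖ + ‖e‖ := norm_sub_le _ _
    have h5 : ‖a + b + c + d - e - f‖ ≤ ‖a + b + c + d - e‖ + ‖f‖ := norm_sub_le _ _
    linarith
  have hn : ‖(16 : ℂ) * R.R X X Y Y‖ ≤ 24 * C := by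
    rw [h16]
    refine (tri _ _ _ _ _ _).trans ?_
    have nX : ‖(4 : ℂ) * R.diag X‖ = 4 * ‖R.diag X‖ := by
      rw [norm_mul]; norm_num
    have nY : ‖(4 : ℂ) * R.diag Y‖ = 4 * ‖R.diag Y‖ := by
      rw [norm_mul]; norm_num
    rw [nX, nY]
    linarith
  have : (16 : ℝ) * ‖R.R X X Y Y‖ ≤ 24 * C := by
    rwa [norm_mul, Complex.norm_ofNat] at hn
  linarith
end
end

section
/- Let R be a Kähler curvature tensor on a complex inner product space V, and let C ≥ 0 be a constant such that |R(Z)| ≤ C‖Z‖⁴ for all Z ∈ V. Then for every pair of orthonormal vectors X, Y ∈ V, |R(X,Ȳ,X,Ȳ) + R(Y,X̄,Y,X̄)| ≤ 8C. -/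
open scoped ComplexConjugate

noncomputable section

variable {V : Type*} [NormedAddCommGroup V] [InnerProductSpace ℂ V]

theorem stmt17 (R : KahlerCurvatureTensor V) (C : ℝ) (hC : 0 ≤ C)
    (hbound : ∀ Z : V, ‖R.diag Z‖ ≤ C * ‖Z‖ ^ 4)
    (X Y : V) (hX : ‖X‖ = 1) (hY : ‖Y‖ = 1) (hXY : (inner ℂ X Y : ℂ) = 0) :
    ‖R.R X Y X Y + R.R Y X Y X‖ ≤ 8 * C := by
  have hb : ∀ c : ℂ, ‖c‖ = 1 → ‖R.R (X + c • Y) (X + c • Y) (X + c • Y) (X + c • Y)‖ ≤ 4 * C := by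
    intro c hc
    have h1 : (inner ℂ X (c • Y) : ℂ) = 0 := by simp [inner_smul_right, hXY]
    have h2 : ‖X + c • Y‖ ^ 2 = 2 := by
      rw [@norm_add_sq ℂ, h1, norm_smul, hc, hX, hY]
      norm_num
    have h4 : ‖X + c • Y‖ ^ 4 = 4 := by
      have : ‖X + c • Y‖ ^ 4 = (‖X + c • Y‖ ^ 2) ^ 2 := by ring
      rw [this, h2]; norm_num
    have := hbound (X + c • Y)
    rw [KahlerCurvatureTensor.diag, h4] at this
    linarith
  have key : R.R (X + (1:ℂ) • Y) (X + (1:ℂ) • Y) (X + (1:ℂ) • Y) (X + (1:ℂ) • Y)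
      + R.R (X + (-1:ℂ) • Y) (X + (-1:ℂ) • Y) (X + (-1:ℂ) • Y) (X + (-1:ℂ) • Y)
      - R.R (X + Complex.I • Y) (X + Complex.I • Y) (X + Complex.I • Y) (X + Complex.I • Y)
      - R.R (X + (-Complex.I) • Y) (X + (-Complex.I) • Y) (X + (-Complex.I) • Y) (X + (-Complex.I) • Y)
      = 4 * (R.R X Y X Y + R.R Y X Y X) := by
    simp only [R.map_add₁, R.map_add₂, R.map_add₃, R.map_add₄, R.map_smul₁, R.map_smul₂,
      R.map_smul₃, R.map_smul₄, map_one, map_neg, Complex.conj_I]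
    ring_nf
    simp only [Complex.I_sq, Complex.I_pow_four]
    ring
  have h1 := hb 1 (by norm_num)
  have h2 := hb (-1) (by norm_num)
  have h3 := hb Complex.I (by simp)
  have h4 := hb (-Complex.I) (by simp)
  have htri : ‖(4 : ℂ) * (R.R X Y X Y + R.R Y X Y X)‖ ≤ 16 * C := by
    rw [← key]
    calc ‖_ + _ - _ - _‖ ≤ ‖_ + _ - _‖ + ‖_‖ := norm_sub_le _ _
      _ ≤ (‖_ + _‖ + ‖_‖) + ‖_‖ := by gcongr; exact norm_sub_le _ _
      _ ≤ ((‖_‖ + ‖_‖) + ‖_‖) + ‖_‖ := by gcongr; exact norm_add_le _ _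
      _ ≤ 16 * C := by linarith
  rw [norm_mul] at htri
  simp only [Complex.norm_ofNat] at htri
  linarith

end
end
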